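/- Let n ≥ 3 be an odd integer and let p be a prime. Then every complex root α of the polynomial x^n − (p−1)·x^{n−1} − p satisfies |α| > 1. -/

import Mathlib

open Polynomial

/-- The polynomial `f_{n,a,p}(x) = x^n - a*x^(n-1) - p` in `ℤ[x]`. -/
noncomputable def fnap (n : ℕ) (a p : ℤ) : Polynomial ℤ :=
  X ^ n - C a * X ^ (n - 1) - C p

theorem stmt_4 (n : ℕ) (p : ℕ) (hn : 3 ≤ n) (hodd : Odd n) (hp : p.Prime) :
    ∀ α : ℂ, Polynomial.aeval α (fnap n ((p : ℤ) - 1) (p : ℤ)) = 0 →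
      1 < ‖α‖ := by
  intro α hα
  have hp2 : (2:ℝ) ≤ (p:ℝ) := by exact_mod_cast hp.two_le
  simp only [fnap, map_sub, map_mul, map_pow, aeval_X, aeval_C] at hα
  push_cast at hα
  by_contra h
  push_neg at h
  set β := α ^ (n-1) with hβdef
  have heq : ((p:ℂ) - 1) * β + (p:ℂ) = α ^ n := by linear_combination -hα
  have habsα : (0:ℝ) ≤ ‖α‖ := norm_nonneg α
  have habsβ : ‖β‖ = (‖α‖) ^ (n-1) := by
    rw [hβdef, norm_pow]
  have habsβ_le : ‖β‖ ≤ 1 := by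
    rw [habsβ]; exact pow_le_one₀ habsα h
  have habsαn_le : ‖α ^ n‖ ≤ 1 := by
    rw [norm_pow]; exact pow_le_one₀ habsα h
  -- lower bound
  have habsp : ‖((p:ℂ))‖ = (p:ℝ) := by
    rw [Complex.norm_natCast]
  have habsp1 : ‖((p:ℂ) - 1)‖ = (p:ℝ) - 1 := by
    have : ((p:ℂ) - 1) = (((p:ℝ) - 1 : ℝ) : ℂ) := by push_cast; ring
    rw [this, Complex.norm_real, Real.norm_eq_abs, abs_of_nonneg (by linarith)]
  have htri : (p:ℝ) ≤ ‖α ^ n‖ + ((p:ℝ) - 1) * ‖β‖ := by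
    calc (p:ℝ) = ‖(((p:ℂ)-1)*β + p) - ((p:ℂ)-1)*β‖ := by
          rw [add_sub_cancel_left, habsp]
      _ ≤ ‖((p:ℂ)-1)*β + p‖ + ‖((p:ℂ)-1)*β‖ :=
          norm_sub_le _ _
      _ = ‖α ^ n‖ + ((p:ℝ) - 1) * ‖β‖ := by
          rw [heq, norm_mul, habsp1]
  have habsβ1 : ‖β‖ = 1 := by nlinarith
  have habsαn1 : ‖α ^ n‖ = 1 := by nlinarith
  -- now show β = -1
  have hns : Complex.normSq (((p:ℂ)-1)*β + p) = 1 := by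
    have := congrArg (· ^ 2) (heq ▸ habsαn1 : ‖((p:ℂ)-1)*β + p‖ = 1)
    simpa [Complex.sq_norm] using this
  have hnsβ : Complex.normSq β = 1 := by
    have := congrArg (· ^ 2) habsβ1
    simpa [Complex.sq_norm] using this
  have hx : β.re = -1 ∧ β.im = 0 := by
    simp only [Complex.normSq_apply, Complex.add_re, Complex.add_im, Complex.mul_re,
      Complex.mul_im, Complex.sub_re, Complex.sub_im, Complex.natCast_re, Complex.natCast_im,
      Complex.one_re, Complex.one_im] at hns hnsβ
    constructor <;> nlinarith [sq_nonneg (β.im), sq_nonneg (β.re + 1), sq_nonneg ((p:ℝ)-1)]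
  have hβeq : β = -1 := by
    apply Complex.ext <;> simp [hx.1, hx.2]
  have hαn1 : α ^ n = 1 := by
    rw [← heq, hβeq]; ring
  have hα1 : α = -1 := by
    have hpow : α ^ n = α * β := by
      rw [hβdef, ← pow_succ']
      congr 1; omega
    rw [hβeq] at hpow
    rw [hαn1] at hpow
    linear_combination hpow
  have : β = 1 := by
    rw [hβdef, hα1]
    have : Even (n - 1) := by
      rcases hodd with ⟨k, hk⟩; exact ⟨k, by omega⟩
    exact this.neg_one_pow
  rw [hβeq] at this
  norm_num at this
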